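/- If D is an ε³-near clique with d = |D|, then the number of vertices v ∈ D with |Γ(v) ∩ D| < (1−ε²)d is at most ε·d + 1/ε²; equivalently |D \ K_{ε²}(D)| ≤ εd + 1/ε². -/

import Mathlib

open Finset
open scoped Classical

/-- `Knear G α X` = set of vertices adjacent to all but an `α` fraction of `X`. -/
noncomputable def Knear {V : Type*} [Fintype V] (G : SimpleGraph V) (α : ℝ)
    (X : Finset V) : Finset V :=
  Finset.univ.filter fun v =>
    (1 - α) * (X.card : ℝ) ≤ ((X.filter fun u => G.Adj v u).card : ℝ)

/-- `Tnear G ε X = K_ε(K_{2ε²}(X)) ∩ K_{2ε²}(X)`. -/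
noncomputable def Tnear {V : Type*} [Fintype V] (G : SimpleGraph V) (ε : ℝ)
    (X : Finset V) : Finset V :=
  Knear G ε (Knear G (2 * ε ^ 2) X) ∩ Knear G (2 * ε ^ 2) X

/-- Number of ordered pairs `(u,v) ∈ U × U` with `u ≠ v` and `{u,v} ∈ E`. -/
noncomputable def epairs {V : Type*} (G : SimpleGraph V) (U : Finset V) : ℕ :=
  ((U ×ˢ U).filter fun p => p.1 ≠ p.2 ∧ G.Adj p.1 p.2).card

/-- If `D` is an `ε³`-near clique of size `d`, then the number of vertices
`v ∈ D` with fewer than `(1−ε²)d` neighbors in `D` is at most `εd + 1/ε²`;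
equivalently `|D \ K_{ε²}(D)| ≤ εd + 1/ε²`. -/
theorem few_low_degree_in_near_clique {V : Type*} [Fintype V] [DecidableEq V]
    (G : SimpleGraph V) (ε : ℝ) (hε : 0 < ε) (hε3 : ε ≤ 1 / 3) (D : Finset V)
    (hD : (epairs G D : ℝ) ≥ (1 - ε ^ 3) * (D.card : ℝ) * ((D.card : ℝ) - 1)) :
    (((D.filter fun v =>
        (((D.filter fun u => G.Adj v u).card : ℝ)) < (1 - ε ^ 2) * (D.card : ℝ)).card : ℝ))
      ≤ ε * (D.card : ℝ) + 1 / ε ^ 2 ∧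
    (((D \ Knear G (ε ^ 2) D).card : ℝ)) ≤ ε * (D.card : ℝ) + 1 / ε ^ 2 := by
  classical
  set B := D.filter (fun v =>
      (((D.filter fun u => G.Adj v u).card : ℝ)) < (1 - ε ^ 2) * (D.card : ℝ)) with hB
  have hsets : D \ Knear G (ε ^ 2) D = B := by
    ext v
    simp only [hB, Finset.mem_sdiff, Finset.mem_filter, Knear, Finset.mem_univ, true_and,
      not_le]
  suffices h : (B.card : ℝ) ≤ ε * (D.card : ℝ) + 1 / ε ^ 2 by
    exact ⟨h, by rw [hsets]; exact h⟩
  have hε2 : (0:ℝ) < ε ^ 2 := by positivity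
  by_cases hcase : (D.card : ℝ) * (1 - ε) ≤ 1 / ε ^ 2
  · have hm : (B.card : ℝ) ≤ (D.card : ℝ) := by
      exact_mod_cast Nat.cast_le.mpr (Finset.card_filter_le _ _)
    nlinarith
  · push_neg at hcase
    set d : ℝ := (D.card : ℝ) with hd
    have hdpos : 0 < d := by nlinarith [one_div_pos.mpr hε2]
    have hDpos : 0 < D.card := by
      have h := hdpos
      rw [hd] at h
      exact_mod_cast h
    set N := (D ×ˢ D).filter (fun p => p.1 ≠ p.2 ∧ ¬ G.Adj p.1 p.2) with hN
    have hsplit : epairs G D + N.card = D.card * D.card - D.card := by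
      have h1 : epairs G D = (D.offDiag.filter (fun p => G.Adj p.1 p.2)).card := by
        unfold epairs
        congr 1
        ext p
        simp only [Finset.mem_filter, Finset.mem_product, Finset.mem_offDiag]
        tauto
      have h2 : N = D.offDiag.filter (fun p => ¬ G.Adj p.1 p.2) := by
        ext p
        simp only [hN, Finset.mem_filter, Finset.mem_product, Finset.mem_offDiag]
        tauto
      rw [h1, h2, Finset.card_filter_add_card_filter_not, Finset.offDiag_card]
    have hle : D.card ≤ D.card * D.card := Nat.le_mul_of_pos_left _ hDpos
    have hNle : (N.card : ℝ) ≤ ε ^ 3 * d * (d - 1) := by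
      have hcast : (epairs G D : ℝ) + (N.card : ℝ) = d * d - d := by
        have := congrArg (Nat.cast (R := ℝ)) hsplit
        push_cast [Nat.cast_sub hle] at this
        linarith
      nlinarith [hD]
    have hmem : ∀ p ∈ (N.filter fun p => p.1 ∈ B), (p.1 : V) ∈ B := by
      intro p hp; exact (Finset.mem_filter.mp hp).2
    have hfiber : (N.filter fun p => p.1 ∈ B).card
        = ∑ v ∈ B, ((N.filter fun p => p.1 ∈ B).filter fun p => p.1 = v).card :=
      Finset.card_eq_sum_card_fiberwise hmem
    have hfib2 : ∀ v ∈ B, ((N.filter fun p => p.1 ∈ B).filter fun p => p.1 = v).card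
        = (D.filter fun u => v ≠ u ∧ ¬ G.Adj v u).card := by
      intro v hv
      apply Finset.card_nbij' (fun p => p.2) (fun u => (v, u))
      · intro p hp
        simp only [hN, Finset.mem_coe, Finset.mem_filter, Finset.mem_product] at hp ⊢
        obtain ⟨⟨⟨⟨_, h2⟩, hne, hna⟩, _⟩, h5⟩ := hp
        subst h5
        exact ⟨h2, hne, hna⟩
      · intro u hu
        simp only [hN, Finset.mem_coe, Finset.mem_filter, Finset.mem_product] at hu ⊢
        exact ⟨⟨⟨⟨Finset.mem_of_mem_filter v hv, hu.1⟩, hu.2⟩, hv⟩, trivial⟩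
      · intro p hp
        simp only [Finset.mem_coe, Finset.mem_filter] at hp
        rw [← hp.2]
      · intro u _; rfl
    have hper : ∀ v ∈ B,
        (ε ^ 2 * d - 1 : ℝ) ≤ ((D.filter fun u => v ≠ u ∧ ¬ G.Adj v u).card : ℝ) := by
      intro v hv
      have hvD : v ∈ D := Finset.mem_of_mem_filter v hv
      have hdeg : ((D.filter fun u => G.Adj v u).card : ℝ) < (1 - ε ^ 2) * d :=
        (Finset.mem_filter.mp hv).2
      have hpart : (D.filter fun u => G.Adj v u).card
          + (D.filter fun u => ¬ G.Adj v u).card = D.card :=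
        Finset.card_filter_add_card_filter_not _
      have hvmem : v ∈ D.filter fun u => ¬ G.Adj v u := by
        simp [hvD, G.irrefl]
      have herase : (D.filter fun u => v ≠ u ∧ ¬ G.Adj v u)
          = (D.filter fun u => ¬ G.Adj v u).erase v := by
        ext u
        simp only [Finset.mem_filter, Finset.mem_erase]
        constructor
        · rintro ⟨h1, h2, h3⟩; exact ⟨fun h => h2 h.symm, h1, h3⟩
        · rintro ⟨h1, h2, h3⟩; exact ⟨h2, fun h => h1 h.symm, h3⟩
      have hcard : (D.filter fun u => v ≠ u ∧ ¬ G.Adj v u).card + 1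
          = (D.filter fun u => ¬ G.Adj v u).card := by
        rw [herase, Finset.card_erase_of_mem hvmem]
        have : 1 ≤ (D.filter fun u => ¬ G.Adj v u).card :=
          Finset.card_pos.mpr ⟨v, hvmem⟩
        omega
      have hsum : ((D.filter fun u => v ≠ u ∧ ¬ G.Adj v u).card : ℝ) + 1
          + ((D.filter fun u => G.Adj v u).card : ℝ) = d := by
        have h1 := congrArg (Nat.cast (R := ℝ)) hpart
        have h2 := congrArg (Nat.cast (R := ℝ)) hcard
        push_cast at h1 h2
        linarith
      nlinarith
    have hNge : (B.card : ℝ) * (ε ^ 2 * d - 1) ≤ (N.card : ℝ) := by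
      have h1 : (N.filter fun p => p.1 ∈ B).card ≤ N.card := Finset.card_filter_le _ _
      have h2 : (B.card : ℝ) * (ε ^ 2 * d - 1)
          ≤ ((N.filter fun p => p.1 ∈ B).card : ℝ) := by
        rw [hfiber]
        push_cast
        calc (B.card : ℝ) * (ε ^ 2 * d - 1) = ∑ _v ∈ B, (ε ^ 2 * d - 1) := by
              rw [Finset.sum_const, nsmul_eq_mul]
          _ ≤ _ := Finset.sum_le_sum (fun v hv => by
              rw [hfib2 v hv]; exact hper v hv)
      calc (B.card : ℝ) * (ε ^ 2 * d - 1) ≤ _ := h2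
        _ ≤ (N.card : ℝ) := by exact_mod_cast h1
    have hkey : (B.card : ℝ) * (ε ^ 2 * d - 1) ≤ ε ^ 3 * d * (d - 1) := le_trans hNge hNle
    have h1 : 1 < ε ^ 2 * (d * (1 - ε)) := by
      have h := mul_lt_mul_of_pos_left hcase hε2
      rwa [show ε ^ 2 * (1 / ε ^ 2) = 1 by field_simp] at h
    have hBpos : (0:ℝ) ≤ (B.card : ℝ) := Nat.cast_nonneg _
    have hx : (0:ℝ) < ε ^ 2 * d - 1 := by
      nlinarith [h1, mul_nonneg (pow_pos hε 3).le hdpos.le]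
    have hfinal : (B.card : ℝ) * ε ^ 2 ≤ ε ^ 3 * d + 1 := by
      by_contra hc
      push_neg at hc
      nlinarith [mul_le_mul_of_nonneg_left hkey hε2.le,
        mul_lt_mul_of_pos_left hc hx, h1,
        mul_nonneg (mul_nonneg (pow_pos hε 3).le (pow_pos hε 2).le) hdpos.le]
    have hgoal' : (B.card : ℝ) - ε * d ≤ 1 / ε ^ 2 := by
      rw [le_div_iff₀ hε2]
      nlinarith [hfinal]
    linarith
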